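/- Let I ⊆ ℝ be an interval, let J ⊆ I be a finite set, let g ∈ L²(I), and let u : I → ℝ be a function such that for all a, b ∈ I with a ≤ b and [a,b] ∩ J = ∅ one has u(b) − u(a) = ∫_a^b g(t) dt. Then for every ε > 0, (1/ε) ∫_{I ∩ (I − ε)} arctan((u(t+ε) − u(t))² / ε) dt ≤ ∫_I g(t)² dt + (π/2) · #J, where I − ε := {t − ε : t ∈ I} and #J is the cardinality of J. -/

import Mathlib

open MeasureTheory


lemma my_arctan_le_self {x : ℝ} (hx : 0 ≤ x) : Real.arctan x ≤ x := by
  rcases hx.eq_or_lt with h | h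
  · simp [← h]
  · have h1 : 0 < Real.arctan x := by
      rw [← Real.arctan_zero]; exact Real.arctan_strictMono h
    have h2 := Real.lt_tan h1 (Real.arctan_lt_pi_div_two x)
    rw [Real.tan_arctan] at h2
    exact h2.le

lemma my_arctan_nonneg {x : ℝ} (hx : 0 ≤ x) : 0 ≤ Real.arctan x := by
  rw [← Real.arctan_zero]; exact Real.arctan_strictMono.monotone hx

lemma my_cs {f : ℝ → ℝ} {a ε : ℝ} (hε : 0 < ε)
    (hf : IntegrableOn f (Set.Ioc a (a + ε)))
    (hf2 : IntegrableOn (fun x => f x ^ 2) (Set.Ioc a (a + ε))) :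
    (∫ x in Set.Ioc a (a + ε), f x) ^ 2 ≤ ε * ∫ x in Set.Ioc a (a + ε), f x ^ 2 := by
  set S := Set.Ioc a (a + ε) with hS
  set m : ℝ := (∫ x in S, f x) / ε with hm
  have h1 : Integrable (fun x => f x ^ 2 - 2 * m * f x) (volume.restrict S) :=
    hf2.sub (hf.const_mul (2 * m))
  have key : (0:ℝ) ≤ ∫ x in S, ((f x ^ 2 - 2 * m * f x) + m ^ 2) := by
    refine integral_nonneg fun x => ?_
    show (0:ℝ) ≤ _
    nlinarith [sq_nonneg (f x - m)]
  have h2 : Integrable (fun _ : ℝ => m ^ 2) (volume.restrict S) :=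
    integrableOn_const measure_Ioc_lt_top.ne
  rw [integral_add h1 h2, integral_sub hf2 (hf.const_mul (2 * m)),
    MeasureTheory.integral_const_mul, integral_const, measureReal_restrict_apply_univ, measureReal_def] at key
  have hvol : (volume S).toReal = ε := by
    simp [hS, Real.volume_Ioc, hε.le]
  rw [hvol, smul_eq_mul] at key
  set A := ∫ x in S, f x with hA
  set Bq := ∫ x in S, f x ^ 2 with hB
  have hmε : m * ε = A := by
    rw [hm]; field_simp
  nlinarith [key, hε]
lemma my_tonelli {G : ℝ → ℝ} (hGm : Measurable G) (hG0 : ∀ x, 0 ≤ G x)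
    (hGint : Integrable G) {ε : ℝ} (hε : 0 < ε) :
    Integrable (fun t => ∫ s in Set.Ioc t (t + ε), G s) ∧
      ∫ t, (∫ s in Set.Ioc t (t + ε), G s) ≤ ε * ∫ s, G s := by
  set Gb : ℝ → ENNReal := fun s => ENNReal.ofReal (G s) with hGb
  have hGbm : Measurable Gb := hGm.ennreal_ofReal
  set F : ℝ → ℝ → ENNReal := fun t s => if t < s ∧ s ≤ t + ε then Gb s else 0 with hF
  have hFm : Measurable (Function.uncurry F) := by
    have hS : MeasurableSet {p : ℝ × ℝ | p.1 < p.2 ∧ p.2 ≤ p.1 + ε} :=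
      (measurableSet_lt measurable_fst measurable_snd).inter
        (measurableSet_le measurable_snd (measurable_fst.add_const ε))
    exact Measurable.ite hS (hGbm.comp measurable_snd) measurable_const
  set Φ' : ℝ → ENNReal := fun t => ∫⁻ s, F t s with hΦ'
  have hΦ'eq : ∀ t, Φ' t = ∫⁻ s in Set.Ioc t (t + ε), Gb s := by
    intro t
    rw [hΦ', ← lintegral_indicator measurableSet_Ioc]
    refine lintegral_congr fun s => ?_
    rw [Set.indicator_apply]
    simp only [hF, Set.mem_Ioc]
  have hΦ'm : Measurable Φ' := Measurable.lintegral_prod_right hFm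
  have hswap : ∫⁻ t, Φ' t = ∫⁻ s, ∫⁻ t, F t s := lintegral_lintegral_swap hFm.aemeasurable
  have hinner : ∀ s, (∫⁻ t, F t s) = Gb s * ENNReal.ofReal ε := by
    intro s
    have : (fun t => F t s) = (Set.Ico (s - ε) s).indicator (fun _ => Gb s) := by
      funext t
      rw [Set.indicator_apply]
      simp only [hF, Set.mem_Ico]
      congr 1
      simp only [eq_iff_iff]
      constructor <;> rintro ⟨h1, h2⟩ <;> constructor <;> linarith
    rw [this, lintegral_indicator measurableSet_Ico, setLIntegral_const,
      Real.volume_Ico]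
    congr 1
    ring_nf
  have htotal : ∫⁻ t, Φ' t = (∫⁻ s, Gb s) * ENNReal.ofReal ε := by
    rw [hswap]
    simp_rw [hinner]
    rw [lintegral_mul_const _ hGbm]
  have hfin : (∫⁻ s, Gb s) < ⊤ := hGint.lintegral_lt_top
  have htotfin : (∫⁻ t, Φ' t) < ⊤ := by
    rw [htotal]; exact ENNReal.mul_lt_top hfin ENNReal.ofReal_lt_top
  have hrepr : ∀ t, (∫ s in Set.Ioc t (t + ε), G s) = (Φ' t).toReal := by
    intro t
    rw [integral_eq_lintegral_of_nonneg_ae (ae_of_all _ hG0)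
      hGm.aestronglyMeasurable, hΦ'eq t]
  have hint : Integrable (fun t => ∫ s in Set.Ioc t (t + ε), G s) := by
    simp_rw [hrepr]
    refine ⟨hΦ'm.ennreal_toReal.aestronglyMeasurable, ?_⟩
    rw [hasFiniteIntegral_iff_ofReal (ae_of_all _ fun t => ENNReal.toReal_nonneg)]
    exact lt_of_le_of_lt (lintegral_mono fun t => ENNReal.ofReal_toReal_le) htotfin
  refine ⟨hint, ?_⟩
  have : ∫ t, (∫ s in Set.Ioc t (t + ε), G s) = (∫⁻ t, Φ' t).toReal := by
    simp_rw [hrepr]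
    exact integral_toReal hΦ'm.aemeasurable (ae_lt_top hΦ'm htotfin.ne)
  rw [this, htotal, ENNReal.toReal_mul, ENNReal.toReal_ofReal hε.le,
    integral_eq_lintegral_of_nonneg_ae (ae_of_all _ hG0) hGm.aestronglyMeasurable]
  rw [mul_comm]

/-- Proposition 5.1 (inequality (3.22gob)): if `I ⊆ ℝ` is an interval, `J ⊆ I` is a finite
set, `g ∈ L²(I)`, and `u` satisfies `u(b) - u(a) = ∫_a^b g` whenever `[a,b] ⊆ I` avoids `J`,
then for every `ε > 0`,
`(1/ε) ∫_{I ∩ (I-ε)} arctan((u(t+ε)-u(t))²/ε) dt ≤ ∫_I g² + (π/2)·#J`. -/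
theorem stmt8 (I : Set ℝ) (hI : I.OrdConnected) (J : Set ℝ) (hJfin : J.Finite)
    (hJI : J ⊆ I) (g : ℝ → ℝ) (hg : MemLp g 2 (volume.restrict I)) (u : ℝ → ℝ)
    (hfund : ∀ a ∈ I, ∀ b ∈ I, a ≤ b → Set.Icc a b ∩ J = ∅ →
      u b - u a = ∫ t in a..b, g t)
    (ε : ℝ) (hε : 0 < ε) :
    (1 / ε) * (∫ t in I ∩ ((fun s => s - ε) '' I),
        Real.arctan ((u (t + ε) - u t) ^ 2 / ε))
      ≤ (∫ t in I, (g t) ^ 2) + (Real.pi / 2) * J.ncard := by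
  classical
  have measI : MeasurableSet I := hI.measurableSet
  -- the translated set and the intersection A
  set I' : Set ℝ := (fun s => s - ε) '' I with hI'def
  have hI' : I'.OrdConnected := by
    constructor
    rintro x ⟨a, ha, rfl⟩ y ⟨b, hb, rfl⟩ z hz
    have h1 := hz.1; have h2 := hz.2
    dsimp only at h1 h2
    exact ⟨z + ε, hI.out ha hb ⟨by linarith, by linarith⟩, by ring⟩
  have measI' : MeasurableSet I' := hI'.measurableSet
  set A : Set ℝ := I ∩ I' with hAdef
  have measA : MeasurableSet A := measI.inter measI'
  -- measurable representative of g
  have hgae := hg.aestronglyMeasurable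
  set g' : ℝ → ℝ := hgae.mk g with hg'def
  have hg'sm : StronglyMeasurable g' := hgae.stronglyMeasurable_mk
  have hg'm : Measurable g' := hg'sm.measurable
  have hgg' : g =ᵐ[volume.restrict I] g' := hgae.ae_eq_mk
  set f : ℝ → ℝ := I.indicator g' with hfdef
  have hfm : Measurable f := hg'm.indicator measI
  set G : ℝ → ℝ := I.indicator (fun s => g' s ^ 2) with hGdef
  have hGm : Measurable G := (hg'm.pow_const 2).indicator measI
  have hG0 : ∀ x, 0 ≤ G x := by
    intro x
    rw [hGdef, Set.indicator_apply]
    split <;> [exact sq_nonneg _; exact le_rfl]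
  have hfG : ∀ x, f x ^ 2 = G x := by
    intro x
    rw [hfdef, hGdef, Set.indicator_apply, Set.indicator_apply]
    split <;> simp
  have hGint : Integrable G := by
    rw [hGdef, integrable_indicator_iff measI]
    exact hg.integrable_sq.congr (hgg'.mono fun x hx => by dsimp only; rw [hx])
  have hIgsq : (∫ t in I, (g t) ^ 2) = ∫ s, G s := by
    rw [hGdef, integral_indicator measI]
    exact integral_congr_ae (hgg'.mono fun x hx => by dsimp only; rw [hx])
  -- the bad set B
  set B : Set ℝ := ⋃ j ∈ J, Set.Icc (j - ε) j with hBdef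
  have measB : MeasurableSet B :=
    MeasurableSet.biUnion hJfin.countable fun j _ => measurableSet_Icc
  have hBvol : volume B ≤ ENNReal.ofReal ((J.ncard : ℝ) * ε) := by
    have hBeq : B = ⋃ j ∈ hJfin.toFinset, Set.Icc (j - ε) j := by
      rw [hBdef]; congr 1; ext j; simp [hJfin.mem_toFinset]
    rw [hBeq]
    calc volume (⋃ j ∈ hJfin.toFinset, Set.Icc (j - ε) j)
        ≤ ∑ j ∈ hJfin.toFinset, volume (Set.Icc (j - ε) j) :=
          measure_biUnion_finset_le _ _
      _ = ∑ j ∈ hJfin.toFinset, ENNReal.ofReal ε := by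
          refine Finset.sum_congr rfl fun j _ => ?_
          rw [Real.volume_Icc]; congr 1; ring
      _ = (hJfin.toFinset.card : ENNReal) * ENNReal.ofReal ε := by
          rw [Finset.sum_const, nsmul_eq_mul]
      _ = ENNReal.ofReal ((J.ncard : ℝ) * ε) := by
          rw [Set.ncard_eq_toFinset_card _ hJfin, ENNReal.ofReal_mul (by positivity),
            ENNReal.ofReal_natCast]
  have hBvolfin : volume B < ⊤ := lt_of_le_of_lt hBvol ENNReal.ofReal_lt_top
  -- the majorant
  set Φ : ℝ → ℝ := fun t => ∫ s in Set.Ioc t (t + ε), G s with hΦdef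
  obtain ⟨hΦint, hΦle⟩ := my_tonelli hGm hG0 hGint hε
  have hΦ0 : ∀ t, 0 ≤ Φ t := fun t => setIntegral_nonneg measurableSet_Ioc fun x _ => hG0 x
  set h : ℝ → ℝ := fun t => B.indicator (fun _ => Real.pi / 2) t + Φ t with hhdef
  have hBind_int : Integrable (B.indicator (fun _ : ℝ => Real.pi / 2)) := by
    rw [integrable_indicator_iff measB]
    exact integrableOn_const hBvolfin.ne
  have hhint : Integrable h := hBind_int.add hΦint
  have hh0 : ∀ t, 0 ≤ h t := by
    intro t
    refine add_nonneg ?_ (hΦ0 t)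
    rw [Set.indicator_apply]; split <;> positivity
  -- pointwise bound on A
  have key : ∀ t ∈ A, Real.arctan ((u (t + ε) - u t) ^ 2 / ε) ≤ h t := by
    rintro t ⟨ht, t', ht', htt'⟩
    have ht' : t + ε ∈ I := by
      have : t' = t + ε := by dsimp at htt'; linarith
      rwa [← this]
    by_cases htB : t ∈ B
    · have h1 : Real.arctan ((u (t + ε) - u t) ^ 2 / ε) ≤ Real.pi / 2 :=
        (Real.arctan_lt_pi_div_two _).le
      have h2 : B.indicator (fun _ : ℝ => Real.pi / 2) t = Real.pi / 2 :=
        Set.indicator_of_mem htB _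
      have := hΦ0 t
      rw [hhdef]; dsimp only; rw [h2]; linarith
    · -- good case
      have hsubI : Set.Ioc t (t + ε) ⊆ I :=
        fun x hx => hI.out ht ht' ⟨hx.1.le, hx.2⟩
      have hJempty : Set.Icc t (t + ε) ∩ J = ∅ := by
        rw [Set.eq_empty_iff_forall_notMem]
        rintro j ⟨⟨hj1, hj2⟩, hjJ⟩
        exact htB (Set.mem_biUnion hjJ ⟨by linarith, hj1⟩)
      have hu : u (t + ε) - u t = ∫ x in Set.Ioc t (t + ε), f x := by
        rw [hfund t ht (t + ε) ht' (by linarith) hJempty,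
          intervalIntegral.integral_of_le (by linarith)]
        refine setIntegral_congr_ae measurableSet_Ioc ?_
        have hae : ∀ᵐ x ∂volume, x ∈ I → g x = g' x := (ae_restrict_iff' measI).1 hgg'
        filter_upwards [hae] with x hx hxIoc
        rw [hx (hsubI hxIoc), hfdef, Set.indicator_of_mem (hsubI hxIoc)]
      -- integrability of f on the interval
      have hGIoc : IntegrableOn G (Set.Ioc t (t + ε)) := hGint.integrableOn
      have hf2int : IntegrableOn (fun x => f x ^ 2) (Set.Ioc t (t + ε)) :=
        hGIoc.congr_fun (fun x _ => (hfG x).symm) measurableSet_Ioc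
      have hfint : IntegrableOn f (Set.Ioc t (t + ε)) := by
        have h1 : IntegrableOn (fun _ : ℝ => (1:ℝ)) (Set.Ioc t (t + ε)) :=
          integrableOn_const measure_Ioc_lt_top.ne
        have hmaj : IntegrableOn (fun x => (f x ^ 2 + 1) / 2) (Set.Ioc t (t + ε)) :=
          (hf2int.add h1).div_const 2
        refine Integrable.mono' hmaj (hfm.aestronglyMeasurable.restrict)
          (ae_of_all _ fun x => ?_)
        show ‖f x‖ ≤ (f x ^ 2 + 1) / 2
        rw [Real.norm_eq_abs]
        nlinarith [sq_nonneg (|f x| - 1), sq_abs (f x), abs_nonneg (f x)]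
      have hCS : (∫ x in Set.Ioc t (t + ε), f x) ^ 2 ≤ ε * Φ t := by
        have := my_cs hε hfint hf2int
        rw [hΦdef]; dsimp only
        calc (∫ x in Set.Ioc t (t + ε), f x) ^ 2
            ≤ ε * ∫ x in Set.Ioc t (t + ε), f x ^ 2 := this
          _ = ε * ∫ x in Set.Ioc t (t + ε), G x := by
              congr 1
              exact setIntegral_congr_fun measurableSet_Ioc fun x _ => hfG x
      have harctan : Real.arctan ((u (t + ε) - u t) ^ 2 / ε)
          ≤ (u (t + ε) - u t) ^ 2 / ε :=
        my_arctan_le_self (div_nonneg (sq_nonneg _) hε.le)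
      have hdiv : (u (t + ε) - u t) ^ 2 / ε ≤ Φ t := by
        rw [hu, div_le_iff₀ hε]
        linarith [hCS]
      have hind0 : 0 ≤ B.indicator (fun _ : ℝ => Real.pi / 2) t := by
        rw [Set.indicator_apply]; split <;> positivity
      rw [hhdef]; dsimp only
      linarith
  -- assemble
  have step1 : (∫ t in A, Real.arctan ((u (t + ε) - u t) ^ 2 / ε)) ≤ ∫ t in A, h t := by
    refine integral_mono_of_nonneg (ae_of_all _ fun t => ?_) (hhint.restrict) ?_
    · exact my_arctan_nonneg (div_nonneg (sq_nonneg _) hε.le)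
    · exact (ae_restrict_iff' measA).2 (ae_of_all _ key)
  have step2 : (∫ t in A, h t) ≤ ∫ t, h t :=
    setIntegral_le_integral hhint (ae_of_all _ hh0)
  have step3 : (∫ t, h t) = (volume B).toReal * (Real.pi / 2) + ∫ t, Φ t := by
    rw [hhdef]
    rw [integral_add hBind_int hΦint, integral_indicator measB, setIntegral_const,
      smul_eq_mul]
    rfl
  have step4 : (volume B).toReal ≤ (J.ncard : ℝ) * ε :=
    ENNReal.toReal_le_of_le_ofReal (by positivity) hBvol
  have step5 : (∫ t, Φ t) ≤ ε * ∫ s, G s := hΦle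
  have hchain : (∫ t in A, Real.arctan ((u (t + ε) - u t) ^ 2 / ε))
      ≤ (J.ncard : ℝ) * ε * (Real.pi / 2) + ε * ∫ s, G s := by
    have hπ : (0:ℝ) < Real.pi / 2 := by positivity
    calc (∫ t in A, Real.arctan ((u (t + ε) - u t) ^ 2 / ε))
        ≤ ∫ t, h t := step1.trans step2
      _ = (volume B).toReal * (Real.pi / 2) + ∫ t, Φ t := step3
      _ ≤ (J.ncard : ℝ) * ε * (Real.pi / 2) + ε * ∫ s, G s := by
          have := mul_le_mul_of_nonneg_right step4 hπ.le
          linarith [step5]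
  rw [hIgsq]
  rw [div_mul_eq_mul_div, one_mul, div_le_iff₀ hε]
  calc (∫ t in A, Real.arctan ((u (t + ε) - u t) ^ 2 / ε))
      ≤ (J.ncard : ℝ) * ε * (Real.pi / 2) + ε * ∫ s, G s := hchain
    _ = ((∫ s, G s) + Real.pi / 2 * (J.ncard : ℝ)) * ε := by ring
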